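/- (Eckart–Young–Mirsky, Frobenius norm) Let A ∈ ℝ^{m×n} have singular value decomposition A = Σᵢ σᵢ uᵢvᵢᵀ with σ₁ ≥ σ₂ ≥ …. Then for any matrix M of rank at most r, ‖A − M‖_F² ≥ Σ_{i>r} σᵢ², with equality attained by A_r = Σ_{i=1}^r σᵢ uᵢvᵢᵀ. -/

import Mathlib

open Matrix Finset

set_option linter.unusedSectionVars false
set_option maxHeartbeats 1000000

section EYMHelpers

variable {ι κ : Type*} [Fintype ι] [Fintype κ]

lemma eym_ortho_sum_mul [DecidableEq κ] (v : κ → ι → ℝ)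
    (hv : ∀ i j, (∑ y, v i y * v j y) = if i = j then 1 else 0)
    (s : Finset κ) (e f : κ → ℝ) :
    (∑ y, (∑ i ∈ s, e i * v i y) * (∑ j ∈ s, f j * v j y)) = ∑ i ∈ s, e i * f i := by
  have h1 : ∀ y : ι, (∑ i ∈ s, e i * v i y) * (∑ j ∈ s, f j * v j y)
      = ∑ i ∈ s, ∑ j ∈ s, (e i * f j) * (v i y * v j y) := by
    intro y
    rw [Finset.sum_mul_sum]
    exact Finset.sum_congr rfl fun i _ => Finset.sum_congr rfl fun j _ => by ring
  simp_rw [h1]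
  rw [Finset.sum_comm]
  have h2 : ∀ i ∈ s, (∑ y : ι, ∑ j ∈ s, (e i * f j) * (v i y * v j y)) = e i * f i := by
    intro i hi
    rw [Finset.sum_comm]
    have h3 : ∀ j ∈ s, (∑ y : ι, (e i * f j) * (v i y * v j y))
        = (e i * f j) * if i = j then 1 else 0 := by
      intro j _
      rw [← Finset.mul_sum, hv i j]
    rw [Finset.sum_congr rfl h3]
    simp only [mul_ite, mul_one, mul_zero]
    rw [Finset.sum_ite_eq s i (fun j => e i * f j)]
    simp [hi]
  exact Finset.sum_congr rfl h2

lemma eym_expand [DecidableEq κ] (w : κ → ι → ℝ)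
    (hw : ∀ i j, (∑ y, w i y * w j y) = if i = j then 1 else 0)
    (a : ι → ℝ) (γ : κ → ℝ) :
    ∑ x, (a x - ∑ j, γ j * w j x) ^ 2
      = ∑ x, a x ^ 2 - 2 * ∑ j, γ j * (∑ x, a x * w j x) + ∑ j, γ j ^ 2 := by
  classical
  have hlast : (∑ x, (∑ j, γ j * w j x) * (∑ j, γ j * w j x)) = ∑ j, γ j * γ j :=
    eym_ortho_sum_mul w hw univ γ γ
  have hmid : (∑ x, a x * (∑ j, γ j * w j x)) = ∑ j, γ j * (∑ x, a x * w j x) := by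
    simp_rw [Finset.mul_sum]
    rw [Finset.sum_comm]
    exact Finset.sum_congr rfl fun j _ => Finset.sum_congr rfl fun x _ => by ring
  have expand : ∀ x, (a x - ∑ j, γ j * w j x) ^ 2
      = a x ^ 2 - 2 * (a x * (∑ j, γ j * w j x)) + (∑ j, γ j * w j x) * (∑ j, γ j * w j x) := by
    intro x; ring
  simp_rw [expand]
  rw [Finset.sum_add_distrib, Finset.sum_sub_distrib, hlast, ← Finset.mul_sum, hmid]
  congr 1
  exact Finset.sum_congr rfl fun j _ => (sq (γ j)).symm ▸ by ring

lemma eym_bessel [DecidableEq κ] (w : κ → ι → ℝ)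
    (hw : ∀ i j, (∑ y, w i y * w j y) = if i = j then 1 else 0)
    (a : ι → ℝ) :
    ∑ j, (∑ x, a x * w j x) ^ 2 ≤ ∑ x, a x ^ 2 := by
  have h := eym_expand w hw a (fun j => ∑ x, a x * w j x)
  have h0 : (0:ℝ) ≤ ∑ x, (a x - ∑ j, (∑ x, a x * w j x) * w j x) ^ 2 :=
    Finset.sum_nonneg fun x _ => sq_nonneg _
  rw [h] at h0
  have : (∑ j, (∑ x, a x * w j x) * (∑ x, a x * w j x)) = ∑ j, (∑ x, a x * w j x) ^ 2 :=
    Finset.sum_congr rfl fun j _ => (sq _).symm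
  nlinarith [h0]

lemma eym_lower [DecidableEq κ] (w : κ → ι → ℝ)
    (hw : ∀ i j, (∑ y, w i y * w j y) = if i = j then 1 else 0)
    (a : ι → ℝ) (γ : κ → ℝ) :
    ∑ x, a x ^ 2 - ∑ j, (∑ x, a x * w j x) ^ 2 ≤ ∑ x, (a x - ∑ j, γ j * w j x) ^ 2 := by
  rw [eym_expand w hw a γ]
  have key : ∑ j, (γ j - (∑ x, a x * w j x)) ^ 2
      = ∑ j, γ j ^ 2 - 2 * ∑ j, γ j * (∑ x, a x * w j x) + ∑ j, (∑ x, a x * w j x) ^ 2 := by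
    have : ∀ j : κ, (γ j - (∑ x, a x * w j x)) ^ 2
        = γ j ^ 2 - 2 * (γ j * (∑ x, a x * w j x)) + (∑ x, a x * w j x) ^ 2 := fun j => by ring
    simp_rw [this]
    rw [Finset.sum_add_distrib, Finset.sum_sub_distrib, ← Finset.mul_sum]
  have h0 : (0:ℝ) ≤ ∑ j, (γ j - (∑ x, a x * w j x)) ^ 2 :=
    Finset.sum_nonneg fun j _ => sq_nonneg _
  linarith

lemma eym_rank_fact {m n : Type*} [Fintype m] [Fintype n] [DecidableEq m] [DecidableEq n]
    (M : Matrix m n ℝ) :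
    ∃ (w : Fin M.rank → m → ℝ) (γ : Fin M.rank → n → ℝ),
      (∀ i j, (∑ x, w i x * w j x) = if i = j then 1 else 0) ∧
      (∀ x y, M x y = ∑ j, γ j y * w j x) := by
  classical
  let e : (m → ℝ) ≃ₗ[ℝ] EuclideanSpace ℝ m := (WithLp.linearEquiv 2 ℝ (m → ℝ)).symm
  let W : Submodule ℝ (EuclideanSpace ℝ m) := (LinearMap.range M.mulVecLin).map (e : (m → ℝ) →ₗ[ℝ] EuclideanSpace ℝ m)
  have hfin : Module.finrank ℝ W = M.rank := LinearEquiv.finrank_map_eq e _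
  let b := stdOrthonormalBasis ℝ W
  let b' : OrthonormalBasis (Fin M.rank) ℝ W := b.reindex (finCongr hfin)
  let w : Fin M.rank → m → ℝ := fun j => ((b' j : EuclideanSpace ℝ m) : m → ℝ)
  have hw : ∀ i j, (∑ x, w i x * w j x) = if i = j then 1 else 0 := by
    intro i j
    have := (orthonormal_iff_ite (𝕜 := ℝ)).1 b'.orthonormal i j
    rw [Submodule.coe_inner] at this
    rw [← this]
    simp [PiLp.inner_apply, RCLike.inner_apply, w]
    exact Finset.sum_congr rfl fun x _ => mul_comm _ _
  have hcol : ∀ y : n, e (fun x => M x y) ∈ W := by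
    intro y
    refine Submodule.mem_map_of_mem ?_
    exact ⟨Pi.single y 1, by ext x; simp [Matrix.mulVec_single]⟩
  refine ⟨w, fun j y => b'.repr ⟨e (fun x => M x y), hcol y⟩ j, hw, ?_⟩
  intro x y
  set c : Fin M.rank → ℝ := fun j => b'.repr ⟨e (fun x => M x y), hcol y⟩ j with hc
  have hs := congrArg (fun z : W => ((z : EuclideanSpace ℝ m)) x)
    (b'.sum_repr ⟨e (fun x => M x y), hcol y⟩)
  simp only [Submodule.coe_sum, SetLike.val_smul] at hs
  have h4 : (∑ j, c j • ((b' j : EuclideanSpace ℝ m))) x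
      = ∑ j, (c j • ((b' j : EuclideanSpace ℝ m))) x :=
    by rw [WithLp.ofLp_sum, Finset.sum_apply]
  rw [h4] at hs
  simp only [PiLp.smul_apply, smul_eq_mul] at hs
  exact hs.symm

end EYMHelpers

/-- Eckart–Young–Mirsky, Frobenius norm: if `A = ∑ i, σ i • uᵢ vᵢᵀ` with
`σ` nonincreasing and nonnegative and `uᵢ`, `vᵢ` orthonormal families, then every matrix `M`
of rank at most `r` satisfies `‖A - M‖_F² ≥ ∑_{i ≥ r} σᵢ²`, with equality attained by the
rank-`r` truncation `A_r = ∑_{i < r} σᵢ uᵢ vᵢᵀ`. -/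
theorem eckart_young_mirsky
    {m n : Type*} [Fintype m] [Fintype n] [DecidableEq m] [DecidableEq n]
    {N : ℕ} (σ : Fin N → ℝ) (u : Fin N → m → ℝ) (v : Fin N → n → ℝ)
    (hσ0 : ∀ i, 0 ≤ σ i) (hσmono : Antitone σ)
    (hu : ∀ i j, (∑ x, u i x * u j x) = if i = j then 1 else 0)
    (hv : ∀ i j, (∑ y, v i y * v j y) = if i = j then 1 else 0)
    (A : Matrix m n ℝ) (hA : A = ∑ i, σ i • vecMulVec (u i) (v i)) (r : ℕ) :
    (∀ M : Matrix m n ℝ, M.rank ≤ r →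
        (∑ i ∈ univ.filter (fun i : Fin N => r ≤ (i : ℕ)), σ i ^ 2)
          ≤ ∑ x, ∑ y, (A x y - M x y) ^ 2) ∧
    (∑ x, ∑ y,
        (A x y - (∑ i ∈ univ.filter (fun i : Fin N => (i : ℕ) < r),
          σ i • vecMulVec (u i) (v i)) x y) ^ 2
      = ∑ i ∈ univ.filter (fun i : Fin N => r ≤ (i : ℕ)), σ i ^ 2) := by
  classical
  -- pointwise formula for A
  have Apt : ∀ x y, A x y = ∑ i, σ i * (u i x * v i y) := by
    intro x y
    rw [hA]
    simp [Matrix.sum_apply, Matrix.smul_apply, vecMulVec_apply, smul_eq_mul, mul_assoc]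
  -- the product family is orthonormal
  set U : Fin N → (m × n) → ℝ := fun i p => u i p.1 * v i p.2 with hUdef
  have hU : ∀ i j, (∑ p : m × n, U i p * U j p) = if i = j then 1 else 0 := by
    intro i j
    have h1 : (∑ p : m × n, U i p * U j p)
        = (∑ x, u i x * u j x) * (∑ y, v i y * v j y) := by
      rw [Fintype.sum_prod_type, Finset.sum_mul_sum]
      exact Finset.sum_congr rfl fun x _ => Finset.sum_congr rfl fun y _ => by
        simp only [hUdef]; ring
    rw [h1, hu i j, hv i j]
    by_cases h : i = j <;> simp [h]
  -- the two index sets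
  set Sge : Finset (Fin N) := univ.filter (fun i : Fin N => r ≤ (i : ℕ)) with hSge
  set Slt : Finset (Fin N) := univ.filter (fun i : Fin N => (i : ℕ) < r) with hSlt
  have hnot : Sge = univ.filter (fun i : Fin N => ¬ (i : ℕ) < r) := by
    simp [hSge, not_lt]
  constructor
  · -- inequality part
    intro M hM
    obtain ⟨w, γ, hw, hMfact⟩ := eym_rank_fact M
    set d : Fin M.rank → n → ℝ := fun j y => ∑ x, A x y * w j x with hd
    set c : Fin N → Fin M.rank → ℝ := fun i j => ∑ x, u i x * w j x with hcdef
    set t : Fin N → ℝ := fun i => ∑ j, c i j ^ 2 with ht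
    -- Step A: lower bound by projection
    have stepA : ∑ y, (∑ x, (A x y) ^ 2 - ∑ j, (d j y) ^ 2)
        ≤ ∑ x, ∑ y, (A x y - M x y) ^ 2 := by
      rw [Finset.sum_comm (s := univ) (t := univ) (f := fun x y => (A x y - M x y) ^ 2)]
      refine Finset.sum_le_sum fun y _ => ?_
      have h := eym_lower w hw (fun x => A x y) (fun j => γ j y)
      calc ∑ x, (A x y) ^ 2 - ∑ j, (d j y) ^ 2
          ≤ ∑ x, (A x y - ∑ j, γ j y * w j x) ^ 2 := h
        _ = ∑ x, (A x y - M x y) ^ 2 :=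
            Finset.sum_congr rfl fun x _ => by rw [hMfact x y]
    -- Step B: Frobenius norm of A
    have hB : (∑ y, ∑ x, (A x y) ^ 2) = ∑ i, σ i ^ 2 := by
      calc ∑ y, ∑ x, (A x y) ^ 2 = ∑ x, ∑ y, (A x y) ^ 2 := Finset.sum_comm
        _ = ∑ p : m × n, (A p.1 p.2) ^ 2 :=
            (Fintype.sum_prod_type (f := fun p : m × n => (A p.1 p.2) ^ 2)).symm
        _ = ∑ p : m × n, (∑ i, σ i * U i p) * (∑ i, σ i * U i p) :=
            Finset.sum_congr rfl fun p _ => by rw [Apt p.1 p.2, sq]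
        _ = ∑ i, σ i * σ i := eym_ortho_sum_mul U hU univ σ σ
        _ = ∑ i, σ i ^ 2 := Finset.sum_congr rfl fun i _ => (sq _).symm
    -- Step C: norms of projected rows
    have hC : ∀ j, (∑ y, (d j y) ^ 2) = ∑ i, (σ i * c i j) * (σ i * c i j) := by
      intro j
      have hdy : ∀ y, d j y = ∑ i, (σ i * c i j) * v i y := by
        intro y
        calc d j y = ∑ x, (∑ i, σ i * (u i x * v i y)) * w j x := by
              simp only [hd]
              exact Finset.sum_congr rfl fun x _ => by rw [Apt x y]
          _ = ∑ x, ∑ i, (σ i * (u i x * v i y)) * w j x := by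
              exact Finset.sum_congr rfl fun x _ => Finset.sum_mul _ _ _
          _ = ∑ i, ∑ x, (σ i * (u i x * v i y)) * w j x := Finset.sum_comm
          _ = ∑ i, (σ i * c i j) * v i y := by
              refine Finset.sum_congr rfl fun i _ => ?_
              have : ∀ x, (σ i * (u i x * v i y)) * w j x
                  = (σ i * v i y) * (u i x * w j x) := fun x => by ring
              simp_rw [this, ← Finset.mul_sum]
              simp only [hcdef]; ring
      simp_rw [hdy, sq]
      exact eym_ortho_sum_mul v hv univ (fun i => σ i * c i j) (fun i => σ i * c i j)
    -- Step D
    have hD : (∑ j, ∑ i, (σ i * c i j) * (σ i * c i j)) = ∑ i, σ i ^ 2 * t i := by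
      rw [Finset.sum_comm]
      refine Finset.sum_congr rfl fun i _ => ?_
      simp only [ht]
      rw [Finset.mul_sum]
      exact Finset.sum_congr rfl fun j _ => by ring
    -- Step E: bounds on t
    have ht0 : ∀ i, 0 ≤ t i := fun i => Finset.sum_nonneg fun j _ => sq_nonneg _
    have ht1 : ∀ i, t i ≤ 1 := by
      intro i
      have := eym_bessel w hw (u i)
      have hnorm : (∑ x, u i x ^ 2) = 1 := by
        have h11 : (∑ x, u i x * u i x) = 1 := by rw [hu i i]; simp
        rw [← h11]
        exact Finset.sum_congr rfl fun x _ => sq _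
      calc t i = ∑ j, (∑ x, u i x * w j x) ^ 2 := rfl
        _ ≤ ∑ x, u i x ^ 2 := eym_bessel w hw (u i)
        _ = 1 := hnorm
    have htk : (∑ i, t i) ≤ (M.rank : ℝ) := by
      have hswap : (∑ i, t i) = ∑ j, ∑ i, c i j ^ 2 := by
        simp only [ht]; exact Finset.sum_comm
      rw [hswap]
      have hbound : ∀ j : Fin M.rank, (∑ i, c i j ^ 2) ≤ 1 := by
        intro j
        have hb := eym_bessel u hu (w j)
        have hnorm : (∑ x, w j x ^ 2) = 1 := by
          have h11 : (∑ x, w j x * w j x) = 1 := by rw [hw j j]; simp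
          rw [← h11]
          exact Finset.sum_congr rfl fun x _ => sq _
        have hcomm : (∑ i, c i j ^ 2) = ∑ i, (∑ x, w j x * u i x) ^ 2 := by
          refine Finset.sum_congr rfl fun i _ => ?_
          congr 1
          exact Finset.sum_congr rfl fun x _ => mul_comm _ _
        rw [hcomm]
        exact hb.trans_eq hnorm
      calc (∑ j, ∑ i, c i j ^ 2) ≤ ∑ j : Fin M.rank, (1:ℝ) :=
            Finset.sum_le_sum fun j _ => hbound j
        _ = (M.rank : ℝ) := by simp
    -- Step F : the combinatorial inequality
    have split1 : (∑ i, σ i ^ 2) = (∑ i ∈ Slt, σ i ^ 2) + ∑ i ∈ Sge, σ i ^ 2 := by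
      rw [hnot, hSlt]
      exact (Finset.sum_filter_add_sum_filter_not univ _ _).symm
    have split2 : (∑ i, σ i ^ 2 * t i)
        = (∑ i ∈ Slt, σ i ^ 2 * t i) + ∑ i ∈ Sge, σ i ^ 2 * t i := by
      rw [hnot, hSlt]
      exact (Finset.sum_filter_add_sum_filter_not univ _ _).symm
    have split3 : (∑ i, t i) = (∑ i ∈ Slt, t i) + ∑ i ∈ Sge, t i := by
      rw [hnot, hSlt]
      exact (Finset.sum_filter_add_sum_filter_not univ _ _).symm
    have key : (∑ i ∈ Sge, σ i ^ 2 * t i) ≤ ∑ i ∈ Slt, σ i ^ 2 * (1 - t i) := by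
      rcases lt_or_ge r N with hr | hr
      · set ρ : ℝ := σ ⟨r, hr⟩ with hρ
        have hρ0 : 0 ≤ ρ := hσ0 _
        have h1 : (∑ i ∈ Sge, σ i ^ 2 * t i) ≤ ∑ i ∈ Sge, ρ ^ 2 * t i := by
          refine Finset.sum_le_sum fun i hi => ?_
          have hri : r ≤ (i : ℕ) := (Finset.mem_filter.1 hi).2
          have hle : σ i ≤ ρ := hσmono (show (⟨r, hr⟩ : Fin N) ≤ i from hri)
          have : σ i ^ 2 ≤ ρ ^ 2 := by nlinarith [hσ0 i]
          exact mul_le_mul_of_nonneg_right this (ht0 i)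
        have h2 : (∑ i ∈ Slt, ρ ^ 2 * (1 - t i)) ≤ ∑ i ∈ Slt, σ i ^ 2 * (1 - t i) := by
          refine Finset.sum_le_sum fun i hi => ?_
          have hri : (i : ℕ) < r := (Finset.mem_filter.1 hi).2
          have hle : ρ ≤ σ i := hσmono (show i ≤ (⟨r, hr⟩ : Fin N) from le_of_lt hri)
          have : ρ ^ 2 ≤ σ i ^ 2 := by nlinarith
          exact mul_le_mul_of_nonneg_right this (by linarith [ht1 i])
        have hcard : (Slt.card : ℝ) = r := by
          have : Slt = Finset.Iio (⟨r, hr⟩ : Fin N) := by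
            ext i
            simp [hSlt, Finset.mem_Iio, Fin.lt_def]
          rw [this, Fin.card_Iio]
        have h4 : (∑ i ∈ Sge, t i) ≤ ∑ i ∈ Slt, (1 - t i) := by
          have e1 : (∑ i ∈ Slt, (1 - t i)) = (Slt.card : ℝ) - ∑ i ∈ Slt, t i := by
            rw [Finset.sum_sub_distrib]
            simp
          have hkr : (M.rank : ℝ) ≤ (r : ℝ) := Nat.cast_le.2 hM
          rw [e1, hcard]
          linarith [split3, htk, Finset.sum_nonneg (s := Slt) fun i _ => ht0 i]
        calc (∑ i ∈ Sge, σ i ^ 2 * t i) ≤ ∑ i ∈ Sge, ρ ^ 2 * t i := h1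
          _ = ρ ^ 2 * ∑ i ∈ Sge, t i := (Finset.mul_sum _ _ _).symm
          _ ≤ ρ ^ 2 * ∑ i ∈ Slt, (1 - t i) :=
              mul_le_mul_of_nonneg_left h4 (sq_nonneg ρ)
          _ = ∑ i ∈ Slt, ρ ^ 2 * (1 - t i) := Finset.mul_sum _ _ _
          _ ≤ ∑ i ∈ Slt, σ i ^ 2 * (1 - t i) := h2
      · have hempty : Sge = ∅ := by
          rw [hSge]
          refine Finset.filter_false_of_mem fun i _ => ?_
          exact not_le.2 (lt_of_lt_of_le i.isLt hr)
        rw [hempty]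
        simp only [Finset.sum_empty]
        exact Finset.sum_nonneg fun i _ =>
          mul_nonneg (sq_nonneg _) (by linarith [ht1 i])
    -- assemble
    have main2 : (∑ y, (∑ x, (A x y) ^ 2 - ∑ j, (d j y) ^ 2))
        = ∑ i, σ i ^ 2 - ∑ i, σ i ^ 2 * t i := by
      rw [Finset.sum_sub_distrib, hB]
      have : (∑ y, ∑ j, (d j y) ^ 2) = ∑ j, ∑ y, (d j y) ^ 2 := Finset.sum_comm
      rw [this]
      have : (∑ j, ∑ y, (d j y) ^ 2) = ∑ j, ∑ i, (σ i * c i j) * (σ i * c i j) :=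
        Finset.sum_congr rfl fun j _ => hC j
      rw [this, hD]
    have split2' : (∑ i ∈ Slt, σ i ^ 2 * (1 - t i))
        = (∑ i ∈ Slt, σ i ^ 2) - ∑ i ∈ Slt, σ i ^ 2 * t i := by
      rw [← Finset.sum_sub_distrib]
      exact Finset.sum_congr rfl fun i _ => by ring
    linarith [stepA, main2, key, split1, split2, split2']
  · -- equality part
    have hsplit : ∀ x y,
        A x y - (∑ i ∈ univ.filter (fun i : Fin N => (i : ℕ) < r),
          σ i • vecMulVec (u i) (v i)) x y = ∑ i ∈ Sge, σ i * (u i x * v i y) := by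
      intro x y
      have h1 : (∑ i ∈ univ.filter (fun i : Fin N => (i : ℕ) < r),
          σ i • vecMulVec (u i) (v i)) x y = ∑ i ∈ Slt, σ i * (u i x * v i y) := by
        rw [hSlt, Matrix.sum_apply]
        exact Finset.sum_congr rfl fun i _ => by
          simp [Matrix.smul_apply, vecMulVec_apply, smul_eq_mul, mul_assoc]
      rw [Apt x y, h1]
      rw [← Finset.sum_filter_add_sum_filter_not univ (fun i : Fin N => (i : ℕ) < r)
        (fun i => σ i * (u i x * v i y))]
      rw [← hSlt, hnot, hSlt]
      ring
    have e1 : (∑ x, ∑ y,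
        (A x y - (∑ i ∈ univ.filter (fun i : Fin N => (i : ℕ) < r),
          σ i • vecMulVec (u i) (v i)) x y) ^ 2)
        = ∑ p : m × n, (∑ i ∈ Sge, σ i * U i p) * (∑ i ∈ Sge, σ i * U i p) := by
      rw [Fintype.sum_prod_type
        (f := fun p : m × n => (∑ i ∈ Sge, σ i * U i p) * (∑ i ∈ Sge, σ i * U i p))]
      exact Finset.sum_congr rfl fun x _ => Finset.sum_congr rfl fun y _ => by
        rw [hsplit x y, sq]
    rw [e1, eym_ortho_sum_mul U hU Sge σ σ]
    exact Finset.sum_congr rfl fun i _ => (sq _).symm
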